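/- arXiv:1511.00877 — 12 statements merged into one kernel-verified Lean document; each statement's English description precedes it below -/
import Mathlib

section
/- Let A be an n×n matrix over ℝ≥0, let λ ∈ ℝ≥0, and let x ∈ ℝ≥0^n be a nonzero vector with A⊗x = λ·x. Then: (a) every cycle lying in supp(x) of any length k ≥ 1 has weight at most λ^k in A; and (b) there exist k ≥ 1 and a cycle of length k lying in supp(x) whose weight in A equals exactly λ^k. (In other words, λ is the maximum cycle geometric mean of the subgraph of the weighted digraph of A induced by supp(x).) -/
open scoped NNReal ENNReal

noncomputable section

namespace MaxAlg

/-- Max-algebraic matrix–vector product over ℝ≥0: (A⊗x)_i = max_j a_{ij}·x_j. -/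
def mulVec {m n : ℕ} (A : Matrix (Fin m) (Fin n) ℝ≥0) (x : Fin n → ℝ≥0) :
    Fin m → ℝ≥0 :=
  fun i => Finset.univ.sup fun j => A i j * x j

/-- Support of a vector. -/
def supp {m : ℕ} (x : Fin m → ℝ≥0) : Set (Fin m) := {i | x i ≠ 0}

/-- Eigencone V(A,λ) = {x : A⊗x = λ·x}. -/
def eigencone {n : ℕ} (A : Matrix (Fin n) (Fin n) ℝ≥0) (lam : ℝ≥0) :
    Set (Fin n → ℝ≥0) :=
  {x | mulVec A x = fun i => lam * x i}

/-- A cycle of length `k ≥ 1` is encoded as `σ : ℕ → Fin n` with `σ k = σ 0`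
(standing for a function on ℤ/kℤ). -/
def IsCycle {n : ℕ} (k : ℕ) (σ : ℕ → Fin n) : Prop := 1 ≤ k ∧ σ k = σ 0

/-- The cycle lies in a set S: all its values belong to S. -/
def LiesIn {n : ℕ} (k : ℕ) (σ : ℕ → Fin n) (S : Set (Fin n)) : Prop :=
  ∀ t < k, σ t ∈ S

/-- Weight of a cycle in A: ∏_t a_{σ(t),σ(t+1)}. -/
def cycleWeight {n : ℕ} (A : Matrix (Fin n) (Fin n) ℝ≥0) (k : ℕ) (σ : ℕ → Fin n) : ℝ≥0 :=
  ∏ t ∈ Finset.range k, A (σ t) (σ (t + 1))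

/-- γ*_j(A,b): the greatest α ∈ [0,∞] with α·a_{ij} ≤ b_i for all i
(conventions 0·∞ = ∞·0 = 0 are built into ℝ≥0∞ multiplication). -/
def gammaStar {m n : ℕ} (A : Matrix (Fin m) (Fin n) ℝ≥0) (b : Fin m → ℝ≥0) (j : Fin n) :
    ℝ≥0∞ :=
  sSup {α : ℝ≥0∞ | ∀ i, α * (A i j : ℝ≥0∞) ≤ (b i : ℝ≥0∞)}

/-- M_j(A,b) = {i : a_{ij}·γ*_j(A,b) = b_i ≠ 0}. -/
def Mset {m n : ℕ} (A : Matrix (Fin m) (Fin n) ℝ≥0) (b : Fin m → ℝ≥0) (j : Fin n) :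
    Set (Fin m) :=
  {i | (A i j : ℝ≥0∞) * gammaStar A b j = (b i : ℝ≥0∞) ∧ b i ≠ 0}

/-- Max-algebraic column span of A. -/
def span {m n : ℕ} (A : Matrix (Fin m) (Fin n) ℝ≥0) : Set (Fin m → ℝ≥0) :=
  {y | ∃ c : Fin n → ℝ≥0, ∀ r, y r = Finset.univ.sup fun j => A r j * c j}

/-- Max-algebraic column span of A with its i-th column removed. -/
def spanMinus {m n : ℕ} (A : Matrix (Fin m) (Fin n) ℝ≥0) (i : Fin n) :
    Set (Fin m → ℝ≥0) :=
  {y | ∃ c : Fin n → ℝ≥0, ∀ r, y r = (Finset.univ.erase i).sup fun j => A r j * c j}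

/-- N^λ(A) = {i : ∃ x ∈ V(A,λ), x_i > 0}. -/
def Nlam {n : ℕ} (A : Matrix (Fin n) (Fin n) ℝ≥0) (lam : ℝ≥0) : Set (Fin n) :=
  {i | ∃ x ∈ eigencone A lam, 0 < x i}

/-- (i,j) is an edge of crit(A,λ). -/
def CritEdge {n : ℕ} (A : Matrix (Fin n) (Fin n) ℝ≥0) (lam : ℝ≥0) (i j : Fin n) : Prop :=
  ∃ k σ, IsCycle k σ ∧ LiesIn k σ (Nlam A lam) ∧ cycleWeight A k σ = lam ^ k ∧
    ∃ t < k, σ t = i ∧ σ (t + 1) = j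

/-- i is a critical node: some cycle lying in N^λ(A) with weight λ^k passes through i. -/
def CritNode {n : ℕ} (A : Matrix (Fin n) (Fin n) ℝ≥0) (lam : ℝ≥0) (i : Fin n) : Prop :=
  ∃ k σ, IsCycle k σ ∧ LiesIn k σ (Nlam A lam) ∧ cycleWeight A k σ = lam ^ k ∧
    ∃ t < k, σ t = i

/-- (i,j) is an edge of crit(A,x,λ). -/
def CritEdgeOn {n : ℕ} (A : Matrix (Fin n) (Fin n) ℝ≥0) (lam : ℝ≥0) (x : Fin n → ℝ≥0)
    (i j : Fin n) : Prop :=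
  ∃ k σ, IsCycle k σ ∧ LiesIn k σ (supp x) ∧ cycleWeight A k σ = lam ^ k ∧
    ∃ t < k, σ t = i ∧ σ (t + 1) = j

/-- x is a simple image eigenvector of A associated with λ. -/
def SimpleImageEig {n : ℕ} (A : Matrix (Fin n) (Fin n) ℝ≥0) (lam : ℝ≥0)
    (x : Fin n → ℝ≥0) : Prop :=
  x ∈ eigencone A lam ∧
    ∀ y : Fin n → ℝ≥0, mulVec A y = (fun i => lam * x i) → y = x

/-- The box (interval) determined by component intervals X_j. -/
def box {n : ℕ} (X : Fin n → Set ℝ≥0) : Set (Fin n → ℝ≥0) := {x | ∀ j, x j ∈ X j}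

/-- Each component set is a nonempty order-convex interval of ℝ≥0. -/
def IsInterval {n : ℕ} (X : Fin n → Set ℝ≥0) : Prop :=
  ∀ j, (X j).Nonempty ∧ (X j).OrdConnected

/-- A has X-simple image eigencone associated with λ. -/
def XSimple {n : ℕ} (A : Matrix (Fin n) (Fin n) ℝ≥0) (lam : ℝ≥0)
    (X : Fin n → Set ℝ≥0) : Prop :=
  ∀ x ∈ eigencone A lam ∩ box X,
    ∀ y ∈ box X, mulVec A y = (fun i => lam * x i) → y = x

/-- Shift lemma for products along a cycle. -/
lemma prod_shift {n : ℕ} (x : Fin n → ℝ≥0) (σ : ℕ → Fin n) (k : ℕ)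
    (hc : σ k = σ 0) (h0 : x (σ 0) ≠ 0) :
    ∏ t ∈ Finset.range k, x (σ (t + 1)) = ∏ t ∈ Finset.range k, x (σ t) := by
  have h1 := Finset.prod_range_succ' (fun t => x (σ t)) k
  have h2 := Finset.prod_range_succ (fun t => x (σ t)) k
  rw [hc] at h2
  exact mul_right_cancel₀ h0 (h1.symm.trans h2)

/-- λ is the maximum cycle geometric mean of digr(A) restricted to supp(x),
for any nonzero eigenvector x associated with λ. -/
theorem stmt0 {n : ℕ} (A : Matrix (Fin n) (Fin n) ℝ≥0) (lam : ℝ≥0)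
    (x : Fin n → ℝ≥0) (hx : x ≠ 0)
    (hev : mulVec A x = fun i => lam * x i) :
    (∀ (k : ℕ) (σ : ℕ → Fin n), IsCycle k σ → LiesIn k σ (supp x) →
        cycleWeight A k σ ≤ lam ^ k) ∧
    (∃ (k : ℕ) (σ : ℕ → Fin n), IsCycle k σ ∧ LiesIn k σ (supp x) ∧
        cycleWeight A k σ = lam ^ k) := by
  have hub : ∀ i j, A i j * x j ≤ lam * x i := by
    intro i j
    have := Finset.le_sup (f := fun j => A i j * x j) (Finset.mem_univ j)
    calc A i j * x j ≤ mulVec A x i := this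
      _ = lam * x i := congrFun hev i
  constructor
  · rintro k σ ⟨hk, hc⟩ hlies
    have hP : (∏ t ∈ Finset.range k, x (σ t)) ≠ 0 := by
      refine Finset.prod_ne_zero_iff.mpr ?_
      intro t ht
      exact hlies t (Finset.mem_range.mp ht)
    have h0 : x (σ 0) ≠ 0 := hlies 0 hk
    have hprod : (∏ t ∈ Finset.range k, A (σ t) (σ (t + 1)) * x (σ (t + 1)))
        ≤ ∏ t ∈ Finset.range k, lam * x (σ t) :=
      Finset.prod_le_prod' fun t _ => hub _ _
    rw [Finset.prod_mul_distrib, Finset.prod_mul_distrib, prod_shift x σ k hc h0,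
      Finset.prod_const, Finset.card_range] at hprod
    exact le_of_mul_le_mul_right hprod (pos_iff_ne_zero.mpr hP)
  · obtain ⟨i0, hi0⟩ := Function.ne_iff.mp hx
    rcases eq_or_ne lam 0 with hlam | hlam
    · refine ⟨1, fun _ => i0, ⟨le_refl 1, rfl⟩, fun t _ => hi0, ?_⟩
      have h1 : A i0 i0 * x i0 ≤ lam * x i0 := hub i0 i0
      rw [hlam, zero_mul, le_zero_iff, mul_eq_zero] at h1
      simp [cycleWeight, hlam, h1.resolve_right hi0]
    · -- successor function on the support
      have hstep : ∀ i, x i ≠ 0 → ∃ j, x j ≠ 0 ∧ A i j * x j = lam * x i := by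
        intro i hi
        obtain ⟨j, _, hj⟩ := Finset.exists_mem_eq_sup Finset.univ
          ⟨i, Finset.mem_univ i⟩ (fun j => A i j * x j)
        have hj' : A i j * x j = lam * x i := by
          rw [← hj]
          exact congrFun hev i
        have hxj : x j ≠ 0 := by
          intro h0
          rw [h0, mul_zero] at hj'
          exact (mul_ne_zero hlam hi) hj'.symm
        exact ⟨j, hxj, hj'⟩
      classical
      set f : Fin n → Fin n := fun i =>
        if h : x i ≠ 0 then (hstep i h).choose else i with hf
      have hfsupp : ∀ i (h : x i ≠ 0), x (f i) ≠ 0 ∧ A i (f i) * x (f i) = lam * x i := by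
        intro i h
        simp only [hf, dif_pos h]
        exact (hstep i h).choose_spec
      set ψ : ℕ → Fin n := fun u => f^[u] i0 with hψ
      have hψsupp : ∀ u, x (ψ u) ≠ 0 := by
        intro u
        induction u with
        | zero => exact hi0
        | succ u ih =>
          have : ψ (u + 1) = f (ψ u) := Function.iterate_succ_apply' f u i0
          rw [this]; exact (hfsupp _ ih).1
      have hψstep : ∀ u, A (ψ u) (ψ (u + 1)) * x (ψ (u + 1)) = lam * x (ψ u) := by
        intro u
        have : ψ (u + 1) = f (ψ u) := Function.iterate_succ_apply' f u i0
        rw [this]; exact (hfsupp _ (hψsupp u)).2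
      obtain ⟨a, b, hab, heq⟩ := Finite.exists_ne_map_eq_of_infinite ψ
      obtain ⟨s, t, hst, hψst⟩ : ∃ s t, s < t ∧ ψ s = ψ t := by
        rcases hab.lt_or_gt with h | h
        · exact ⟨a, b, h, heq⟩
        · exact ⟨b, a, h, heq.symm⟩
      set k := t - s with hk
      refine ⟨k, fun u => ψ (s + u), ⟨Nat.le_sub_of_add_le (by omega), ?_⟩,
        fun u _ => hψsupp _, ?_⟩
      · show ψ (s + k) = ψ (s + 0)
        rw [hk]
        have : s + (t - s) = t := by omega
        rw [this, Nat.add_zero]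
        exact hψst.symm
      · have hc : ψ (s + k) = ψ (s + 0) := by
          have : s + k = t := by omega
          rw [this, Nat.add_zero]; exact hψst.symm
        have h0 : x (ψ (s + 0)) ≠ 0 := hψsupp _
        have hprod : (∏ u ∈ Finset.range k, A (ψ (s + u)) (ψ (s + (u + 1)))
              * x (ψ (s + (u + 1))))
            = ∏ u ∈ Finset.range k, lam * x (ψ (s + u)) := by
          refine Finset.prod_congr rfl fun u _ => ?_
          have : s + (u + 1) = (s + u) + 1 := by omega
          rw [this]; exact hψstep (s + u)
        rw [Finset.prod_mul_distrib, Finset.prod_mul_distrib,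
          prod_shift x (fun u => ψ (s + u)) k hc h0,
          Finset.prod_const, Finset.card_range] at hprod
        have hP : (∏ u ∈ Finset.range k, x (ψ (s + u))) ≠ 0 :=
          Finset.prod_ne_zero_iff.mpr fun u _ => hψsupp _
        exact mul_right_cancel₀ hP hprod

end MaxAlg

end
end

section
/- Let A be an n×n matrix over ℝ≥0, let λ > 0, and let x ∈ ℝ≥0^n satisfy A⊗x = λ·x. Then for all indices i, j: the pair (i,j) is an edge of crit(A,x,λ) if and only if (i,j) is an edge of crit(A,λ) and both x_i > 0 and x_j > 0. That is, crit(A,x,λ) equals the restriction of crit(A,λ) to supp(x). -/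
open scoped NNReal ENNReal

noncomputable section

namespace MaxAlg

/-- crit(A,x,λ) is the restriction of crit(A,λ) to supp(x). -/
theorem stmt2 {n : ℕ} (A : Matrix (Fin n) (Fin n) ℝ≥0) (lam : ℝ≥0) (hlam : 0 < lam)
    (x : Fin n → ℝ≥0) (hev : mulVec A x = fun i => lam * x i) :
    ∀ i j : Fin n,
      CritEdgeOn A lam x i j ↔ CritEdge A lam i j ∧ 0 < x i ∧ 0 < x j := by
  intro i j
  constructor
  · rintro ⟨k, σ, hcyc, hlies, hw, t, htk, hti, htj⟩
    have hsupp : supp x ⊆ Nlam A lam := fun r hr => ⟨x, hev, pos_iff_ne_zero.mpr hr⟩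
    refine ⟨⟨k, σ, hcyc, fun s hs => hsupp (hlies s hs), hw, t, htk, hti, htj⟩, ?_, ?_⟩
    · exact pos_iff_ne_zero.mpr (hti ▸ hlies t htk)
    · rcases lt_or_eq_of_le (Nat.succ_le_of_lt htk) with h | h
      · exact pos_iff_ne_zero.mpr (htj ▸ hlies (t + 1) h)
      · have h0 : σ (t + 1) = σ 0 := by rw [show t + 1 = k from h, hcyc.2]
        exact pos_iff_ne_zero.mpr (htj ▸ h0 ▸ hlies 0 hcyc.1)
  · rintro ⟨⟨k, σ, hcyc, hlies, hw, t, htk, hti, htj⟩, hxi, hxj⟩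
    have hpos : ∀ s < k, A (σ s) (σ (s + 1)) ≠ 0 := by
      intro s hs h0
      have hz : cycleWeight A k σ = 0 :=
        Finset.prod_eq_zero (Finset.mem_range.mpr hs) h0
      rw [hw] at hz
      exact (pow_pos hlam k).ne' hz
    have hstep : ∀ s < k, x (σ s) = 0 → x (σ (s + 1)) = 0 := by
      intro s hs h0
      have hle : A (σ s) (σ (s + 1)) * x (σ (s + 1)) ≤ lam * x (σ s) := by
        have h := congrFun hev (σ s)
        rw [← h]
        exact Finset.le_sup (f := fun p => A (σ s) p * x p) (Finset.mem_univ (σ (s + 1)))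
      rw [h0, mul_zero] at hle
      have heq := le_antisymm hle zero_le
      exact (mul_eq_zero.mp heq).resolve_left (hpos s hs)
    have key : ∀ s < k, x (σ s) ≠ 0 := by
      by_contra h
      push_neg at h
      obtain ⟨s, hs, h0⟩ := h
      have h1 : ∀ d, s + d ≤ k → x (σ (s + d)) = 0 := by
        intro d
        induction d with
        | zero => intro _; simpa using h0
        | succ d ih =>
          intro hd
          have hh := hstep (s + d) (by omega) (ih (by omega))
          rwa [Nat.add_succ]
      have h2 : x (σ 0) = 0 := by
        have := h1 (k - s) (by omega)
        rwa [Nat.add_sub_cancel' (le_of_lt hs), hcyc.2] at this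
      have h3 : ∀ u, u ≤ k → x (σ u) = 0 := by
        intro u
        induction u with
        | zero => intro _; exact h2
        | succ u ih => intro hu; exact hstep u (by omega) (ih (by omega))
      exact hxi.ne' (hti ▸ h3 t (le_of_lt htk))
    exact ⟨k, σ, hcyc, fun s hs => key s hs, hw, t, htk, hti, htj⟩

end MaxAlg

end
end

section
/- Let A be an m×n matrix over ℝ≥0 and b ∈ ℝ≥0^m. A vector x ∈ ℝ≥0^n satisfies A⊗x = b if and only if there exists a subset N' ⊆ {1,…,n} such that: (a) ⋃_{j∈N'} M_j(A,b) = supp(b); (b) N' is minimal with property (a), i.e. no proper subset of N' satisfies (a); (c) (x_j : [0,∞]) = γ*_j(A,b) for every j ∈ N'; and (d) (x_j : [0,∞]) ≤ γ*_j(A,b) for every j ∈ {1,…,n}. -/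
open scoped NNReal ENNReal

noncomputable section

namespace MaxAlg

lemma gammaStar_mul_le {m n : ℕ} (A : Matrix (Fin m) (Fin n) ℝ≥0) (b : Fin m → ℝ≥0)
    (j : Fin n) (i : Fin m) : gammaStar A b j * (A i j : ℝ≥0∞) ≤ (b i : ℝ≥0∞) := by
  unfold gammaStar
  rw [ENNReal.sSup_mul]
  exact iSup₂_le fun α hα => hα i

/-- description of the solution set of A⊗x = b via minimal coverings. -/
theorem stmt4 {m n : ℕ} (A : Matrix (Fin m) (Fin n) ℝ≥0) (b : Fin m → ℝ≥0)
    (x : Fin n → ℝ≥0) :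
    mulVec A x = b ↔
      ∃ N' : Set (Fin n),
        (⋃ j ∈ N', Mset A b j) = supp b ∧
        (∀ N'' : Set (Fin n), N'' ⊂ N' → (⋃ j ∈ N'', Mset A b j) ≠ supp b) ∧
        (∀ j ∈ N', (x j : ℝ≥0∞) = gammaStar A b j) ∧
        (∀ j : Fin n, (x j : ℝ≥0∞) ≤ gammaStar A b j) := by
  classical
  constructor
  · intro hAx
    -- x_j ≤ γ*_j always
    have hle : ∀ j : Fin n, (x j : ℝ≥0∞) ≤ gammaStar A b j := by
      intro j
      refine le_sSup ?_
      intro i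
      have h1 : A i j * x j ≤ b i := by
        rw [← hAx]
        exact Finset.le_sup (f := fun j => A i j * x j) (Finset.mem_univ j)
      calc (x j : ℝ≥0∞) * (A i j : ℝ≥0∞) = ((A i j * x j : ℝ≥0) : ℝ≥0∞) := by
            push_cast; ring
        _ ≤ (b i : ℝ≥0∞) := by exact_mod_cast h1
    -- the set S of "tight" columns covers supp b
    set S : Finset (Fin n) := Finset.univ.filter
      (fun j => (x j : ℝ≥0∞) = gammaStar A b j) with hS
    have hcover : ∀ T : Finset (Fin n), T ⊆ S →
        ((⋃ j ∈ (T : Set (Fin n)), Mset A b j) = supp b ↔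
          ∀ i ∈ supp b, ∃ j ∈ T, i ∈ Mset A b j) := by
      intro T hT
      constructor
      · intro h i hi
        rw [← h] at hi
        simpa using hi
      · intro h
        apply Set.Subset.antisymm
        · intro i hi
          simp only [Set.mem_iUnion] at hi
          obtain ⟨j, _, hj⟩ := hi
          exact hj.2
        · intro i hi
          obtain ⟨j, hjT, hj⟩ := h i hi
          simp only [Set.mem_iUnion]
          exact ⟨j, hjT, hj⟩
    have hScover : ∀ i ∈ supp b, ∃ j ∈ S, i ∈ Mset A b j := by
      intro i hi
      have hbi : b i ≠ 0 := hi
      have hsup : Finset.univ.sup (fun j => A i j * x j) = b i := by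
        rw [← hAx]; rfl
      have hne : (Finset.univ : Finset (Fin n)).Nonempty := by
        by_contra hemp
        rw [Finset.not_nonempty_iff_eq_empty] at hemp
        rw [hemp] at hsup
        simp at hsup
        exact hbi hsup.symm
      obtain ⟨j, -, hj⟩ := Finset.exists_mem_eq_sup Finset.univ hne
        (fun j => A i j * x j)
      rw [hsup] at hj
      -- A i j * x j = b i, b i ≠ 0
      have hAij : (A i j : ℝ≥0∞) ≠ 0 := by
        intro h0
        apply hbi
        rw [hj]
        have : A i j = 0 := by exact_mod_cast h0
        simp [this]
      have hAij' : (A i j : ℝ≥0∞) ≠ ⊤ := ENNReal.coe_ne_top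
      have hx : (A i j : ℝ≥0∞) * (x j : ℝ≥0∞) = (b i : ℝ≥0∞) := by
        rw [← ENNReal.coe_mul]
        exact_mod_cast hj.symm
      have hg : (A i j : ℝ≥0∞) * gammaStar A b j = (b i : ℝ≥0∞) := by
        apply le_antisymm
        · rw [mul_comm]; exact gammaStar_mul_le A b j i
        · rw [← hx]
          exact mul_le_mul_right (hle j) _
      have hxg : (x j : ℝ≥0∞) = gammaStar A b j := by
        have h1 : (x j : ℝ≥0∞) = (b i : ℝ≥0∞) / (A i j : ℝ≥0∞) :=
          (ENNReal.eq_div_iff hAij hAij').mpr hx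
        have h2 : gammaStar A b j = (b i : ℝ≥0∞) / (A i j : ℝ≥0∞) :=
          (ENNReal.eq_div_iff hAij hAij').mpr hg
        rw [h1, h2]
      refine ⟨j, ?_, hg, hbi⟩
      simp [hS, hxg]
    -- pick a minimal-cardinality subfamily of S still covering
    set P : Finset (Finset (Fin n)) := S.powerset.filter
      (fun T => (⋃ j ∈ (T : Set (Fin n)), Mset A b j) = supp b) with hP
    have hSP : S ∈ P := by
      rw [hP, Finset.mem_filter]
      refine ⟨Finset.mem_powerset_self S, ?_⟩
      rw [hcover S (le_refl S)]
      exact hScover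
    obtain ⟨T, hTP, hTmin⟩ := Finset.exists_min_image P Finset.card ⟨S, hSP⟩
    rw [hP, Finset.mem_filter, Finset.mem_powerset] at hTP
    refine ⟨(T : Set (Fin n)), hTP.2, ?_, ?_, hle⟩
    · intro N'' hN'' hcov
      have hfin : N''.Finite := Set.toFinite N''
      set T'' := hfin.toFinset with hT''
      have hTsub : T'' ⊆ T := by
        intro a ha
        rw [hT'', Set.Finite.mem_toFinset] at ha
        exact_mod_cast hN''.1 ha
      have hTne : T'' ≠ T := by
        intro h
        apply hN''.2
        intro a ha
        rw [← Set.Finite.mem_toFinset hfin, hT'', h] at *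
        exact_mod_cast ha
      have hcard : T''.card < T.card :=
        Finset.card_lt_card (lt_of_le_of_ne hTsub hTne)
      have hmem : T'' ∈ P := by
        rw [hP, Finset.mem_filter, Finset.mem_powerset]
        constructor
        · exact hTsub.trans hTP.1
        · have : (T'' : Set (Fin n)) = N'' := by
            rw [hT'']; exact Set.Finite.coe_toFinset hfin
          rw [this]; exact hcov
      exact absurd (hTmin T'' hmem) (not_le.mpr hcard)
    · intro j hj
      have : j ∈ S := hTP.1 (by exact_mod_cast hj)
      rw [hS, Finset.mem_filter] at this
      exact this.2
  · rintro ⟨N', hcov, -, heq, hle⟩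
    funext i
    show Finset.univ.sup (fun j => A i j * x j) = b i
    apply le_antisymm
    · apply Finset.sup_le
      intro j _
      have h1 : (A i j : ℝ≥0∞) * (x j : ℝ≥0∞) ≤ (b i : ℝ≥0∞) := by
        calc (A i j : ℝ≥0∞) * (x j : ℝ≥0∞) ≤ (A i j : ℝ≥0∞) * gammaStar A b j :=
              mul_le_mul_right (hle j) _
          _ ≤ (b i : ℝ≥0∞) := by rw [mul_comm]; exact gammaStar_mul_le A b j i
      rw [← ENNReal.coe_mul] at h1
      exact_mod_cast h1
    · by_cases hbi : b i = 0
      · simp [hbi]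
      · have hi : i ∈ supp b := hbi
        rw [← hcov] at hi
        simp only [Set.mem_iUnion] at hi
        obtain ⟨j, hjN, hgM, -⟩ := hi
        have hxj : (x j : ℝ≥0∞) = gammaStar A b j := heq j hjN
        have : (A i j : ℝ≥0∞) * (x j : ℝ≥0∞) = (b i : ℝ≥0∞) := by
          rw [hxj]; exact hgM
        rw [← ENNReal.coe_mul] at this
        have h2 : A i j * x j = b i := by exact_mod_cast this
        calc b i = A i j * x j := h2.symm
          _ ≤ Finset.univ.sup (fun j => A i j * x j) :=
              Finset.le_sup (f := fun j => A i j * x j) (Finset.mem_univ j)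

end MaxAlg

end
end

section
/- Let A be an m×n matrix over ℝ≥0 and b ∈ ℝ≥0^m. Suppose N' is a proper subset of {1,…,n} with ⋃_{j∈N'} M_j(A,b) = supp(b), and let i ∉ N'. Then for every α ∈ ℝ≥0 with (α : [0,∞]) ≤ γ*_i(A,b) there exists x ∈ ℝ≥0^n with A⊗x = b and x_i = α. -/
open scoped NNReal ENNReal

noncomputable section

namespace MaxAlg

/-- given a proper covering subset N' and i ∉ N', any value
α ≤ γ*_i(A,b) is attained as the i-th coordinate of a solution. -/
theorem stmt5 {m n : ℕ} (A : Matrix (Fin m) (Fin n) ℝ≥0) (b : Fin m → ℝ≥0)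
    (N' : Set (Fin n)) (hproper : N' ≠ Set.univ)
    (hcover : (⋃ j ∈ N', Mset A b j) = supp b)
    (i : Fin n) (hi : i ∉ N') :
    ∀ α : ℝ≥0, (α : ℝ≥0∞) ≤ gammaStar A b i →
      ∃ x : Fin n → ℝ≥0, mulVec A x = b ∧ x i = α := by
  classical
  have key : ∀ (j : Fin n) (r : Fin m),
      gammaStar A b j * (A r j : ℝ≥0∞) ≤ (b r : ℝ≥0∞) := by
    intro j r
    by_cases h : A r j = 0
    · simp [h]
    · have h0 : (A r j : ℝ≥0∞) ≠ 0 := by exact_mod_cast h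
      have hle : gammaStar A b j ≤ (b r : ℝ≥0∞) / (A r j : ℝ≥0∞) := by
        apply sSup_le
        intro β hβ
        exact (ENNReal.le_div_iff_mul_le (Or.inl h0)
          (Or.inl ENNReal.coe_ne_top)).mpr (hβ r)
      calc gammaStar A b j * (A r j : ℝ≥0∞)
          ≤ ((b r : ℝ≥0∞) / (A r j : ℝ≥0∞)) * (A r j : ℝ≥0∞) :=
            mul_le_mul_left hle _
        _ = (A r j : ℝ≥0∞) * ((b r : ℝ≥0∞) / (A r j : ℝ≥0∞)) := mul_comm _ _
        _ ≤ (b r : ℝ≥0∞) := ENNReal.mul_div_le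
  intro α hα
  refine ⟨fun j => if j = i then α else
    if j ∈ N' then (gammaStar A b j).toNNReal else 0, ?_, by simp⟩
  funext r
  simp only [mulVec]
  apply le_antisymm
  · apply Finset.sup_le
    intro j _
    by_cases hji : j = i
    · subst hji
      simp only [if_pos rfl]
      have : ((A r j * α : ℝ≥0) : ℝ≥0∞) ≤ (b r : ℝ≥0∞) := by
        push_cast
        calc (A r j : ℝ≥0∞) * (α : ℝ≥0∞) ≤ (A r j : ℝ≥0∞) * gammaStar A b j :=
              mul_le_mul_right hα _
          _ = gammaStar A b j * (A r j : ℝ≥0∞) := mul_comm _ _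
          _ ≤ (b r : ℝ≥0∞) := key j r
      exact_mod_cast this
    · simp only [if_neg hji]
      by_cases hjN : j ∈ N'
      · simp only [if_pos hjN]
        have : ((A r j * (gammaStar A b j).toNNReal : ℝ≥0) : ℝ≥0∞) ≤ (b r : ℝ≥0∞) := by
          push_cast
          calc (A r j : ℝ≥0∞) * ((gammaStar A b j).toNNReal : ℝ≥0∞)
              ≤ (A r j : ℝ≥0∞) * gammaStar A b j :=
                mul_le_mul_right (ENNReal.coe_toNNReal_le_self) _
            _ = gammaStar A b j * (A r j : ℝ≥0∞) := mul_comm _ _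
            _ ≤ (b r : ℝ≥0∞) := key j r
        exact_mod_cast this
      · simp [hjN]
  · by_cases hb : b r = 0
    · simp [hb]
    · have hr : r ∈ supp b := hb
      rw [← hcover] at hr
      simp only [Set.mem_iUnion] at hr
      obtain ⟨j, hjN, hjM⟩ := hr
      obtain ⟨heq, hbne⟩ := hjM
      have hji : j ≠ i := fun h => hi (h ▸ hjN)
      have hgne : gammaStar A b j ≠ ⊤ := by
        intro htop
        rw [htop] at heq
        by_cases h : A r j = 0
        · simp [h] at heq; exact hbne heq.symm
        · have h0 : (A r j : ℝ≥0∞) ≠ 0 := by exact_mod_cast h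
          rw [ENNReal.mul_top h0] at heq
          exact ENNReal.coe_ne_top heq.symm
      have hval : A r j * (gammaStar A b j).toNNReal = b r := by
        have : ((A r j * (gammaStar A b j).toNNReal : ℝ≥0) : ℝ≥0∞) = (b r : ℝ≥0∞) := by
          push_cast
          rw [ENNReal.coe_toNNReal hgne]
          exact heq
        exact_mod_cast this
      have : b r = (fun k => A r k * (if k = i then α else
          if k ∈ N' then (gammaStar A b k).toNNReal else 0)) j := by
        simp [if_neg hji, if_pos hjN, hval]
      rw [this]
      exact Finset.le_sup (f := fun k => A r k * (if k = i then α else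
        if k ∈ N' then (gammaStar A b k).toNNReal else 0)) (Finset.mem_univ j)


end MaxAlg

end
end

section
/- Let n ≥ 1 and let E be a relation on {1,…,n} (a digraph) which is strongly connected in the sense that for all nodes i, j there is a nonempty E-path from i to j (i.e. Relation.TransGen E i j holds for all i, j). Then the following are equivalent: (1) there exists a node i such that every node k has an edge to some node j with j ≠ i (i.e. ⋃_{j≠i} M_j(E) = {1,…,n}, where M_j(E) is the set of in-neighbours of j); (2) it is not the case that every node has exactly one outgoing edge (the latter condition, under strong connectivity, means precisely that the digraph is a single cycle through all its nodes). -/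
open scoped NNReal ENNReal

noncomputable section

namespace MaxAlg

/-- covering the nodes of a strongly connected digraph by ingoing
edges avoiding one node, iff the digraph is not a single cycle. -/
theorem stmt6 {n : ℕ} (hn : 1 ≤ n) (E : Fin n → Fin n → Prop)
    (hsc : ∀ i j : Fin n, Relation.TransGen E i j) :
    (∃ i : Fin n, ∀ k : Fin n, ∃ j : Fin n, j ≠ i ∧ E k j) ↔
      ¬ (∀ k : Fin n, ∃! j : Fin n, E k j) := by
  have hout : ∀ k : Fin n, ∃ j, E k j := by
    intro k
    obtain ⟨c, hc, -⟩ := Relation.TransGen.head'_iff.mp (hsc k k)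
    exact ⟨c, hc⟩
  have hin : ∀ i : Fin n, ∃ m, E m i := by
    intro i
    cases hsc i i with
    | single h => exact ⟨i, h⟩
    | tail _ h => exact ⟨_, h⟩
  constructor
  · rintro ⟨i, hi⟩ huniq
    obtain ⟨m, hm⟩ := hin i
    obtain ⟨j, hji, hmj⟩ := hi m
    obtain ⟨j', _, huj⟩ := huniq m
    exact hji ((huj j hmj).trans (huj i hm).symm)
  · intro h
    by_contra hc
    push_neg at hc
    have hsel : ∀ i : Fin n, ∃ k, ∀ j, E k j → j = i := by
      intro i
      obtain ⟨k, hk⟩ := hc i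
      exact ⟨k, fun j hj => by_contra fun hne => (hk j hne hj).elim⟩
    choose f hf using hsel
    have hinj : Function.Injective f := by
      intro a b hab
      obtain ⟨j, hj⟩ := hout (f a)
      have h1 := hf a j hj
      have h2 := hf b j (hab ▸ hj)
      exact h1 ▸ h2
    have hsurj := Finite.surjective_of_injective hinj
    apply h
    intro k
    obtain ⟨i, rfl⟩ := hsurj k
    obtain ⟨j, hj⟩ := hout (f i)
    exact ⟨j, hj, fun y hy => (hf i y hy).trans (hf i j hj).symm⟩

end MaxAlg

end
end

section
/- Let A be an n×n matrix over ℝ≥0, λ ∈ ℝ≥0, and x ∈ ℝ≥0^n with A⊗x = λ·x. Suppose j is an index for which there exists l with a_{lj}·x_j = λ·x_l ≠ 0. Then: (i) (x_k : [0,∞]) ≤ γ*_k(A,λ·x) for every k; (ii) γ*_j(A,λ·x) = (x_j : [0,∞]) and M_j(A,λ·x) = {i : a_{ij}·x_j = λ·x_i ≠ 0}; (iii) for every i such that (i,j) is an edge of crit(A,λ), one has i ∈ M_j(A,λ·x). -/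
open scoped NNReal ENNReal

noncomputable section

namespace MaxAlg

/-- properties of γ* and M_j for systems with an eigenvector
on the right-hand side. -/
theorem stmt7 {n : ℕ} (A : Matrix (Fin n) (Fin n) ℝ≥0) (lam : ℝ≥0)
    (x : Fin n → ℝ≥0) (hev : mulVec A x = fun i => lam * x i)
    (j l : Fin n) (hl : A l j * x j = lam * x l) (hl0 : lam * x l ≠ 0) :
    (∀ k : Fin n, (x k : ℝ≥0∞) ≤ gammaStar A (fun i => lam * x i) k) ∧
    (gammaStar A (fun i => lam * x i) j = (x j : ℝ≥0∞) ∧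
      Mset A (fun i => lam * x i) j =
        {i : Fin n | A i j * x j = lam * x i ∧ lam * x i ≠ 0}) ∧
    (∀ i : Fin n, CritEdge A lam i j → i ∈ Mset A (fun i' => lam * x i') j) := by
  have key : ∀ k i : Fin n, A i k * x k ≤ lam * x i := by
    intro k i
    have h := congrFun hev i
    rw [← h]
    exact Finset.le_sup (f := fun j' => A i j' * x j') (Finset.mem_univ k)
  have hAlj : A l j ≠ 0 := by
    intro h0; rw [h0, zero_mul] at hl; exact hl0 hl.symm
  have hxj : x j ≠ 0 := by
    intro h0; rw [h0, mul_zero] at hl; exact hl0 hl.symm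
  have hlam : lam ≠ 0 := by
    intro h0; rw [h0, zero_mul] at hl0; exact hl0 rfl
  -- part (i)
  have h1 : ∀ k : Fin n, (x k : ℝ≥0∞) ≤ gammaStar A (fun i => lam * x i) k := by
    intro k
    apply le_sSup
    intro i
    rw [mul_comm]
    exact_mod_cast key k i
  -- part (ii): gammaStar value
  have h2 : gammaStar A (fun i => lam * x i) j = (x j : ℝ≥0∞) := by
    apply le_antisymm
    · apply sSup_le
      intro α hα
      have hαl : α * (A l j : ℝ≥0∞) ≤ ((lam * x l : ℝ≥0) : ℝ≥0∞) := hα l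
      rw [← hl] at hαl
      push_cast at hαl
      rw [mul_comm (A l j : ℝ≥0∞) (x j : ℝ≥0∞)] at hαl
      exact (ENNReal.mul_le_mul_iff_left (by exact_mod_cast hAlj) ENNReal.coe_ne_top).mp hαl
    · exact h1 j
  have hM : Mset A (fun i => lam * x i) j =
      {i : Fin n | A i j * x j = lam * x i ∧ lam * x i ≠ 0} := by
    ext i
    simp only [Mset, Set.mem_setOf_eq, h2, ← ENNReal.coe_mul, ENNReal.coe_inj]
  refine ⟨h1, ⟨h2, hM⟩, ?_⟩
  -- part (iii)
  intro i hij
  rw [hM]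
  obtain ⟨k, σ, ⟨hk1, hσk⟩, _, hw, t, ht, hσt, hσt1⟩ := hij
  -- all edge weights on the cycle are nonzero
  have hedge : ∀ t' ∈ Finset.range k, A (σ t') (σ (t' + 1)) ≠ 0 := by
    have : cycleWeight A k σ ≠ 0 := by
      rw [hw]; exact pow_ne_zero k hlam
    exact Finset.prod_ne_zero_iff.mp this
  -- positivity propagates backwards along the cycle
  have step : ∀ t' < k, x (σ (t' + 1)) ≠ 0 → x (σ t') ≠ 0 := by
    intro t' ht' hx1 h0
    have h := key (σ (t' + 1)) (σ t')
    rw [h0, mul_zero] at h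
    exact (mul_ne_zero (hedge t' (Finset.mem_range.mpr ht')) hx1)
      (le_antisymm h zero_le)
  have down : ∀ s, s ≤ k → x (σ s) ≠ 0 → ∀ r ≤ s, x (σ r) ≠ 0 := by
    intro s
    induction s with
    | zero => intro _ h r hr; rwa [Nat.le_zero.mp hr]
    | succ m ih =>
      intro hmk hx r hr
      rcases Nat.lt_or_ge r (m + 1) with h' | h'
      · exact ih (Nat.le_of_succ_le hmk) (step m hmk hx) r (Nat.lt_succ_iff.mp h')
      · have : r = m + 1 := le_antisymm hr h'
        rwa [this]
  have hpos : ∀ s ≤ k, x (σ s) ≠ 0 := by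
    have ht1 : x (σ (t + 1)) ≠ 0 := by rw [hσt1]; exact hxj
    have h0 : x (σ 0) ≠ 0 := down (t + 1) ht ht1 0 (Nat.zero_le _)
    have hk' : x (σ k) ≠ 0 := by rwa [hσk]
    intro s hs
    exact down k le_rfl hk' s hs
  -- products of both sides of the edge inequalities agree
  set f : ℕ → ℝ≥0 := fun t' => A (σ t') (σ (t' + 1)) * x (σ (t' + 1)) with hf
  set g : ℕ → ℝ≥0 := fun t' => lam * x (σ t') with hg
  have hfg : ∀ t' ∈ Finset.range k, f t' ≤ g t' :=
    fun t' _ => key (σ (t' + 1)) (σ t')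
  have hshift : (∏ t' ∈ Finset.range k, x (σ (t' + 1))) =
      ∏ t' ∈ Finset.range k, x (σ t') := by
    have e1 := Finset.prod_range_succ (fun t' => x (σ t')) k
    have e2 := Finset.prod_range_succ' (fun t' => x (σ t')) k
    rw [e2, hσk] at e1
    exact mul_right_cancel₀ (by rw [← hσk]; exact hpos k le_rfl) e1
  have hprod : (∏ t' ∈ Finset.range k, f t') = ∏ t' ∈ Finset.range k, g t' := by
    simp only [hf, hg, Finset.prod_mul_distrib]
    have : (∏ t' ∈ Finset.range k, A (σ t') (σ (t' + 1))) = lam ^ k := hw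
    rw [this, hshift, Finset.prod_const, Finset.card_range]
  -- hence each inequality is an equality
  have hgne : ∀ t' ∈ Finset.range k, g t' ≠ 0 := by
    intro t' ht'
    exact mul_ne_zero hlam (hpos t' (le_of_lt (Finset.mem_range.mp ht')))
  have heq : f t = g t := by
    by_contra hne
    have hlt : f t < g t := lt_of_le_of_ne (hfg t (Finset.mem_range.mpr ht)) hne
    have hrest : (∏ t' ∈ (Finset.range k).erase t, f t') ≤
        ∏ t' ∈ (Finset.range k).erase t, g t' :=
      Finset.prod_le_prod (fun _ _ => zero_le)
        (fun t' ht' => hfg t' (Finset.mem_of_mem_erase ht'))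
    have hrestpos : 0 < ∏ t' ∈ (Finset.range k).erase t, g t' := by
      rw [pos_iff_ne_zero]
      exact Finset.prod_ne_zero_iff.mpr
        (fun t' ht' => hgne t' (Finset.mem_of_mem_erase ht'))
    have hlt2 : (∏ t' ∈ Finset.range k, f t') < ∏ t' ∈ Finset.range k, g t' := by
      rw [← Finset.mul_prod_erase _ f (Finset.mem_range.mpr ht),
        ← Finset.mul_prod_erase _ g (Finset.mem_range.mpr ht)]
      calc f t * ∏ t' ∈ (Finset.range k).erase t, f t'
          ≤ f t * ∏ t' ∈ (Finset.range k).erase t, g t' := by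
            exact mul_le_mul_right hrest _
        _ < g t * ∏ t' ∈ (Finset.range k).erase t, g t' :=
            mul_lt_mul_of_pos_right hlt hrestpos
    exact absurd hprod (ne_of_lt hlt2)
  have heq' : A i j * x j = lam * x i := by
    simpa [hf, hg, hσt, hσt1] using heq
  refine ⟨heq', mul_ne_zero hlam ?_⟩
  rw [← hσt]
  exact hpos t (le_of_lt ht)

end MaxAlg

end
end

section
/- Let A be an n×n matrix over ℝ≥0 and λ > 0. Then the following are equivalent: (1) A is weakly λ-robust, i.e. every x ∈ ℝ≥0^n for which A^{⊗t}⊗x ∈ V(A,λ) for some t ≥ 1 already satisfies x ∈ V(A,λ); (2) every x ∈ V(A,λ) is a simple image eigenvector of A associated with λ, i.e. for every x with A⊗x = λ·x, the only y ∈ ℝ≥0^n with A⊗y = λ·x is y = x. -/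
open scoped NNReal ENNReal

noncomputable section

namespace MaxAlg

lemma mulVec_smul {n : ℕ} (A : Matrix (Fin n) (Fin n) ℝ≥0) (c : ℝ≥0) (x : Fin n → ℝ≥0) :
    mulVec A (fun j => c * x j) = fun i => c * mulVec A x i := by
  funext i
  simp only [mulVec, NNReal.mul_finset_sup]
  congr 1; funext j; ring

lemma eigencone_smul {n : ℕ} {A : Matrix (Fin n) (Fin n) ℝ≥0} {lam : ℝ≥0}
    (c : ℝ≥0) {x : Fin n → ℝ≥0} (hx : x ∈ eigencone A lam) :
    (fun j => c * x j) ∈ eigencone A lam := by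
  have := mulVec_smul A c x
  simp only [eigencone, Set.mem_setOf_eq] at hx ⊢
  rw [this, hx]
  funext i; ring

/-- A is weakly λ-robust iff every eigenvector is a simple image
eigenvector. -/
theorem stmt10 {n : ℕ} (A : Matrix (Fin n) (Fin n) ℝ≥0) (lam : ℝ≥0) (hlam : 0 < lam) :
    (∀ x : Fin n → ℝ≥0,
        (∃ t : ℕ, 1 ≤ t ∧ (mulVec A)^[t] x ∈ eigencone A lam) →
          x ∈ eigencone A lam) ↔
      (∀ x ∈ eigencone A lam,
        ∀ y : Fin n → ℝ≥0, mulVec A y = (fun i => lam * x i) → y = x) := by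
  constructor
  · intro hrob x hx y hy
    have hlx : (fun i => lam * x i) ∈ eigencone A lam := eigencone_smul lam hx
    have hyV : y ∈ eigencone A lam := by
      apply hrob y ⟨1, le_refl 1, ?_⟩
      simpa [Function.iterate_one, hy] using hlx
    have h2 : mulVec A y = fun i => lam * y i := hyV
    have : (fun i => lam * y i) = (fun i => lam * x i) := h2.symm.trans hy
    funext i
    have := congrFun this i
    exact mul_left_cancel₀ hlam.ne' this
  · intro hsimp x ⟨t, ht1, hxt⟩
    clear ht1
    induction t generalizing x with
    | zero => simpa using hxt
    | succ s ih =>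
      have hstep : (mulVec A)^[s + 1] x = mulVec A ((mulVec A)^[s] x) := by
        rw [Function.iterate_succ_apply']
      set w := (mulVec A)^[s] x with hw
      set z := (mulVec A)^[s + 1] x with hz
      have hAw : mulVec A w = z := hstep.symm
      -- λ·w is a preimage of λ·z
      have hlz : mulVec A (fun j => lam * w j) = fun i => lam * z i := by
        rw [mulVec_smul, hAw]
      have heq : (fun j => lam * w j) = z := hsimp z hxt _ hlz
      -- hence w = λ⁻¹ · z ∈ V
      have hwV : w ∈ eigencone A lam := by
        have : w = fun j => lam⁻¹ * z j := by
          funext j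
          have := congrFun heq j
          rw [← this, ← mul_assoc, inv_mul_cancel₀ hlam.ne', one_mul]
        rw [this]
        exact eigencone_smul lam⁻¹ hxt
      exact ih x hwV

end MaxAlg

end
end

section
/- Let A be an n×n matrix over ℝ≥0, λ > 0, and let X ⊆ ℝ≥0^n be an interval, i.e. X = {x : x_j ∈ X_j for all j} where each X_j ⊆ ℝ≥0 is nonempty and order-convex. If A is weakly (X,λ)-robust, then A has X-simple image eigencone associated with λ, i.e. for every x ∈ V(A,λ) ∩ X and every y ∈ X with A⊗y = λ·x one has y = x. -/
open scoped NNReal ENNReal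

noncomputable section

namespace MaxAlg

/-- weak (X,λ)-robustness implies X-simple image eigencone. -/
theorem stmt11 {n : ℕ} (A : Matrix (Fin n) (Fin n) ℝ≥0) (lam : ℝ≥0) (hlam : 0 < lam)
    (X : Fin n → Set ℝ≥0) (hX : IsInterval X)
    (hrob : ∀ x ∈ box X,
      (∃ t : ℕ, 1 ≤ t ∧ (mulVec A)^[t] x ∈ eigencone A lam) →
        x ∈ eigencone A lam) :
    XSimple A lam X := by
  intro x hx y hy hAy
  obtain ⟨hxe, hxb⟩ := hx
  -- λ·x is also an eigenvector
  have hscale : (fun i => lam * x i) ∈ eigencone A lam := by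
    have : mulVec A (fun i => lam * x i) = fun i => lam * (lam * x i) := by
      funext i
      simp only [mulVec]
      rw [show (Finset.univ.sup fun j => A i j * (lam * x j))
            = lam * Finset.univ.sup fun j => A i j * x j by
        rw [NNReal.mul_finset_sup]
        exact Finset.sup_congr rfl (fun j _ => by ring)]
      have := congrFun hxe i
      simp only [mulVec] at this
      rw [this]
    exact this
  have hyeig : y ∈ eigencone A lam := by
    apply hrob y hy
    exact ⟨1, le_refl 1, by simpa [Function.iterate_one, hAy] using hscale⟩
  funext i
  have h1 : lam * y i = lam * x i := by
    have := congrFun hyeig i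
    rw [← this, ← congrFun hAy i]
  exact mul_left_cancel₀ (ne_of_gt hlam) h1

end MaxAlg

end
end

section
/- Let A be an n×n matrix over ℝ≥0 and let X ⊆ ℝ≥0^n be an interval, i.e. X = {x : x_j ∈ X_j for all j} where each X_j ⊆ ℝ≥0 is nonempty and order-convex. Suppose that A has X-simple image eigencone associated with the eigenvalue λ = 1 (i.e. for every x ∈ X with A⊗x = x, the only y ∈ X with A⊗y = x is y = x), and that X is invariant under A (x ∈ X implies A⊗x ∈ X). Then A is weakly (X,1)-robust: every x ∈ X such that A^{⊗t}⊗x ∈ V(A,1) for some t ≥ 1 satisfies A⊗x = x. -/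
open scoped NNReal ENNReal

noncomputable section

namespace MaxAlg

/-- X-simple image eigencone plus invariance of X implies weak
(X,1)-robustness. -/
theorem stmt12 {n : ℕ} (A : Matrix (Fin n) (Fin n) ℝ≥0)
    (X : Fin n → Set ℝ≥0) (hX : IsInterval X)
    (hsimple : XSimple A 1 X)
    (hinv : ∀ x ∈ box X, mulVec A x ∈ box X) :
    ∀ x ∈ box X,
      (∃ t : ℕ, 1 ≤ t ∧ (mulVec A)^[t] x ∈ eigencone A 1) →
        mulVec A x = x := by
  have key : ∀ t : ℕ, ∀ x ∈ box X, (mulVec A)^[t] x ∈ eigencone A 1 →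
      mulVec A x = x ∨ t = 0 := by
    intro t
    induction t with
    | zero => intro x _ _; exact Or.inr rfl
    | succ t ih =>
      intro x hx hmem
      left
      have hAx : mulVec A x ∈ box X := hinv x hx
      have h1 : (mulVec A)^[t] (mulVec A x) ∈ eigencone A 1 := by
        rwa [Function.iterate_succ_apply] at hmem
      have hAxe : mulVec A x ∈ eigencone A 1 := by
        rcases ih (mulVec A x) hAx h1 with h | h
        · simpa [eigencone] using h
        · subst h; simpa using h1
      have := hsimple (mulVec A x) ⟨hAxe, hAx⟩ x hx (by
        funext i; simp)
      exact this.symm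
  rintro x hx ⟨t, ht, hmem⟩
  rcases key t x hx hmem with h | h
  · exact h
  · omega

end MaxAlg

end
end

section
/- Let A be an m×n matrix over ℝ≥0 and let X ⊆ ℝ≥0^m be an interval X = {y : y_i ∈ X_i for all i} (each X_i ⊆ ℝ≥0 nonempty and order-convex) which is x̄-closed, i.e. it possesses a greatest element x̄ ∈ X with y ≤ x̄ for all y ∈ X. Suppose z ∈ ℝ≥0^m satisfies: z ∈ span(A), z ≤ x̄, and y ≤ z for every y ∈ span(A) with y ≤ x̄ (so z is the max-algebraic projection P_A(x̄) of x̄ onto span(A)). Then X ∩ span(A) is nonempty if and only if z ∈ X. -/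
open scoped NNReal ENNReal

noncomputable section

namespace MaxAlg

/-- an x̄-closed interval meets span(A) iff the projection of x̄
onto span(A) lies in the interval. -/
theorem stmt16 {m n : ℕ} (A : Matrix (Fin m) (Fin n) ℝ≥0)
    (X : Fin m → Set ℝ≥0) (hX : IsInterval X)
    (xbar : Fin m → ℝ≥0) (hxbar : xbar ∈ box X)
    (hgreatest : ∀ y ∈ box X, y ≤ xbar)
    (z : Fin m → ℝ≥0) (hz : z ∈ span A) (hzle : z ≤ xbar)
    (hzmax : ∀ y ∈ span A, y ≤ xbar → y ≤ z) :
    (box X ∩ span A).Nonempty ↔ z ∈ box X := by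
  constructor
  · rintro ⟨y, hyX, hyS⟩
    intro j
    have hyz : y ≤ z := hzmax y hyS (hgreatest y hyX)
    exact ((hX j).2.out (hyX j) (hxbar j)) ⟨hyz j, hzle j⟩
  · intro hzX
    exact ⟨z, hzX, hz⟩

end MaxAlg

end
end

section
/- Let A be an n×n matrix over ℝ≥0, λ > 0, and let X ⊆ ℝ≥0^n be an interval, X = {x : x_j ∈ X_j for all j} with each X_j ⊆ ℝ≥0 nonempty and order-convex, which is x̲-open: inf X_j ∉ X_j for every j. Assume V(A,λ) ∩ X ≠ ∅. Then A has X-simple image eigencone associated with λ if and only if span(A^{(i)}) ∩ V(A,λ) ∩ X = ∅ for every i = 1,…,n. -/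
open scoped NNReal ENNReal

noncomputable section

namespace MaxAlg

/-- In an x̲-open box, every coordinate of a member is positive. -/
lemma mem_box_pos {n : ℕ} {X : Fin n → Set ℝ≥0}
    (hopen : ∀ j : Fin n, sInf (X j) ∉ X j) {x : Fin n → ℝ≥0}
    (hx : x ∈ box X) (j : Fin n) : 0 < x j := by
  by_contra h
  push_neg at h
  have hx0 : x j = 0 := le_antisymm h zero_le
  have hInf : sInf (X j) = 0 :=
    le_antisymm (by rw [← hx0]; exact csInf_le (OrderBot.bddBelow _) (hx j)) zero_le
  exact hopen j (by rw [hInf, ← hx0]; exact hx j)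

/-- In an x̲-open box, there is a strictly smaller element in each component. -/
lemma exists_lt_mem {n : ℕ} {X : Fin n → Set ℝ≥0}
    (hopen : ∀ j : Fin n, sInf (X j) ∉ X j) {x : Fin n → ℝ≥0}
    (hx : x ∈ box X) (j : Fin n) : ∃ t ∈ X j, t < x j := by
  by_contra h
  push_neg at h
  have hInf : sInf (X j) = x j :=
    le_antisymm (csInf_le (OrderBot.bddBelow _) (hx j)) (le_csInf ⟨_, hx j⟩ h)
  exact hopen j (by rw [hInf]; exact hx j)

/-- A positive finset sup is attained. -/
lemma sup_attain {α : Type*} {s : Finset α} {f : α → ℝ≥0} (h : 0 < s.sup f) :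
    ∃ b ∈ s, f b = s.sup f := by
  rcases s.eq_empty_or_nonempty with rfl | hs
  · simp at h
  · obtain ⟨b, hb, hb2⟩ := s.exists_mem_eq_sup hs f
    exact ⟨b, hb, hb2.symm⟩

/-- Splitting a sup over `univ` into the `j`-term and the rest. -/
lemma sup_split {n : ℕ} (j : Fin n) (f : Fin n → ℝ≥0) :
    Finset.univ.sup f = f j ⊔ (Finset.univ.erase j).sup f := by
  conv_lhs => rw [← Finset.insert_erase (Finset.mem_univ j)]
  rw [Finset.sup_insert]

/-- If `λ·x` is expressible avoiding column `j` (with coefficients `z`),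
then `x ∈ spanMinus A j`. -/
lemma spanMinus_of_redundant {n : ℕ} {A : Matrix (Fin n) (Fin n) ℝ≥0} {lam : ℝ≥0}
    (hlam : 0 < lam) {x z : Fin n → ℝ≥0} {j : Fin n}
    (h : ∀ r, (Finset.univ.erase j).sup (fun k => A r k * z k) = lam * x r) :
    x ∈ spanMinus A j := by
  refine ⟨fun k => lam⁻¹ * z k, fun r => ?_⟩
  have h1 : (fun k => A r k * (lam⁻¹ * z k)) = fun k => lam⁻¹ * (A r k * z k) := by
    funext k; ring
  rw [h1, ← NNReal.mul_finset_sup, h r, ← mul_assoc, inv_mul_cancel₀ hlam.ne', one_mul]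

/-- Extracting the `j`-term of a sup when the remaining sup is strictly smaller. -/
lemma term_eq_of_erase_lt {n : ℕ} {j : Fin n} {f : Fin n → ℝ≥0} {c : ℝ≥0}
    (hfull : Finset.univ.sup f = c) (hlt : (Finset.univ.erase j).sup f < c) :
    f j = c := by
  have hsplit := sup_split j f
  rw [hfull] at hsplit
  rcases le_sup_iff.mp (le_of_eq hsplit) with h2 | h2
  · exact le_antisymm (by rw [← hfull]; exact Finset.le_sup (Finset.mem_univ j)) h2
  · exact absurd h2 (not_le_of_gt hlt)

/-- If `A⊗y = λ·x`, `x` is an eigenvector with positive entries, and `y j < x j`,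
then column `j` is redundant in the representation `λ·x = A⊗y`. -/
lemma redundant_of_lt {n : ℕ} {A : Matrix (Fin n) (Fin n) ℝ≥0} {lam : ℝ≥0}
    (hlam : 0 < lam) {x y : Fin n → ℝ≥0} {j : Fin n}
    (hxe : x ∈ eigencone A lam) (hAy : mulVec A y = fun i => lam * x i)
    (hpos : ∀ r, 0 < x r) (hyj : y j < x j) :
    ∀ r, (Finset.univ.erase j).sup (fun k => A r k * y k) = lam * x r := by
  intro r
  have hfull : Finset.univ.sup (fun k => A r k * y k) = lam * x r := congrFun hAy r
  have hle : (Finset.univ.erase j).sup (fun k => A r k * y k) ≤ lam * x r := by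
    rw [← hfull]; exact Finset.sup_mono (Finset.erase_subset _ _)
  rcases lt_or_eq_of_le hle with hlt | heq
  · exfalso
    have hterm : A r j * y j = lam * x r := term_eq_of_erase_lt hfull hlt
    have hposr : (0:ℝ≥0) < lam * x r := mul_pos hlam (hpos r)
    have hArj : (0:ℝ≥0) < A r j := by
      rcases eq_or_lt_of_le (zero_le : (0:ℝ≥0) ≤ A r j) with h0 | h0
      · rw [← h0, zero_mul] at hterm; exact absurd hterm.symm (ne_of_gt hposr)
      · exact h0
    have h1 : A r j * y j < A r j * x j := mul_lt_mul_of_pos_left hyj hArj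
    have h2 : A r j * x j ≤ lam * x r := by
      have hfx : Finset.univ.sup (fun k => A r k * x k) = lam * x r := congrFun hxe r
      rw [← hfx]; exact Finset.le_sup (f := fun k => A r k * x k) (Finset.mem_univ j)
    rw [hterm] at h1
    exact absurd (lt_of_lt_of_le h1 h2) (lt_irrefl _)
  · exact heq

/-- If `A⊗y = λ·x`, `x` is an eigenvector with positive entries, and `x j < y j`,
then column `j` is redundant in the representation `λ·x = A⊗x`. -/
lemma redundant_of_gt {n : ℕ} {A : Matrix (Fin n) (Fin n) ℝ≥0} {lam : ℝ≥0}
    (hlam : 0 < lam) {x y : Fin n → ℝ≥0} {j : Fin n}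
    (hxe : x ∈ eigencone A lam) (hAy : mulVec A y = fun i => lam * x i)
    (hpos : ∀ r, 0 < x r) (hyj : x j < y j) :
    ∀ r, (Finset.univ.erase j).sup (fun k => A r k * x k) = lam * x r := by
  intro r
  have hfull : Finset.univ.sup (fun k => A r k * x k) = lam * x r := congrFun hxe r
  have hle : (Finset.univ.erase j).sup (fun k => A r k * x k) ≤ lam * x r := by
    rw [← hfull]; exact Finset.sup_mono (Finset.erase_subset _ _)
  rcases lt_or_eq_of_le hle with hlt | heq
  · exfalso
    have hterm : A r j * x j = lam * x r := term_eq_of_erase_lt hfull hlt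
    have hposr : (0:ℝ≥0) < lam * x r := mul_pos hlam (hpos r)
    have hArj : (0:ℝ≥0) < A r j := by
      rcases eq_or_lt_of_le (zero_le : (0:ℝ≥0) ≤ A r j) with h0 | h0
      · rw [← h0, zero_mul] at hterm; exact absurd hterm.symm (ne_of_gt hposr)
      · exact h0
    have h1 : A r j * x j < A r j * y j := mul_lt_mul_of_pos_left hyj hArj
    have h2 : A r j * y j ≤ lam * x r := by
      have hfy : Finset.univ.sup (fun k => A r k * y k) = lam * x r := congrFun hAy r
      rw [← hfy]; exact Finset.le_sup (f := fun k => A r k * y k) (Finset.mem_univ j)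
    rw [hterm] at h1
    exact absurd (lt_of_lt_of_le h1 h2) (lt_irrefl _)
  · exact heq

/-- If a positive eigenvector lies in `spanMinus A i`, then some column `j`
is redundant in the representation `λ·x = A⊗x`. -/
lemma exists_redundant {n : ℕ} {A : Matrix (Fin n) (Fin n) ℝ≥0} {lam : ℝ≥0}
    (hlam : 0 < lam) {x : Fin n → ℝ≥0} {i : Fin n}
    (hsp : x ∈ spanMinus A i) (hxe : x ∈ eigencone A lam) (hpos : ∀ r, 0 < x r) :
    ∃ j, ∀ r, (Finset.univ.erase j).sup (fun k => A r k * x k) = lam * x r := by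
  by_contra hcon
  push_neg at hcon
  choose r hr using hcon
  have hle : ∀ j, (Finset.univ.erase j).sup (fun k => A (r j) k * x k) ≤ lam * x (r j) := by
    intro j
    rw [← congrFun hxe (r j)]
    exact Finset.sup_mono (Finset.erase_subset _ _)
  have hlt : ∀ j, (Finset.univ.erase j).sup (fun k => A (r j) k * x k) < lam * x (r j) :=
    fun j => lt_of_le_of_ne (hle j) (hr j)
  have hterm : ∀ j, A (r j) j * x j = lam * x (r j) :=
    fun j => term_eq_of_erase_lt (congrFun hxe (r j)) (hlt j)
  obtain ⟨c, hc⟩ := hsp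
  -- the row whose unique maximizer is column i
  set rI := r i with hrI
  have hsupPos : (0:ℝ≥0) < (Finset.univ.erase i).sup (fun k => A rI k * c k) := by
    rw [← hc rI]; exact hpos rI
  obtain ⟨m, hm, hmeq⟩ := sup_attain hsupPos
  -- hmeq : A rI m * c m = sup = x rI
  have hmx : A rI m * c m = x rI := by rw [hmeq, ← hc rI]
  -- A rI m * x m < lam * x rI
  have h1 : A rI m * x m < lam * x rI :=
    lt_of_le_of_lt (Finset.le_sup (f := fun k => A rI k * x k) hm) (hlt i)
  -- A rI m * (lam * c m) = lam * x rI
  have h2 : A rI m * (lam * c m) = lam * x rI := by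
    rw [← hmx]; ring
  have h3 : x m < lam * c m := by
    refine lt_of_mul_lt_mul_left ?_ (zero_le : (0:ℝ≥0) ≤ A rI m)
    rw [h2]; exact h1
  -- now use the row s := r m, whose unique maximizer is column m
  set s := r m with hs
  have htm : A s m * x m = lam * x s := hterm m
  have hposr : (0:ℝ≥0) < lam * x s := mul_pos hlam (hpos s)
  have hAsm : (0:ℝ≥0) < A s m := by
    rcases eq_or_lt_of_le (zero_le : (0:ℝ≥0) ≤ A s m) with h0 | h0
    · rw [← h0, zero_mul] at htm; exact absurd htm.symm (ne_of_gt hposr)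
    · exact h0
  have h4 : A s m * c m ≤ x s := by
    rw [hc s]; exact Finset.le_sup (f := fun k => A s k * c k) hm
  have h5 : A s m * (lam * c m) ≤ lam * x s := by
    calc A s m * (lam * c m) = lam * (A s m * c m) := by ring
    _ ≤ lam * x s := mul_le_mul_right h4 lam
  have h6 : A s m * x m < A s m * (lam * c m) := mul_lt_mul_of_pos_left h3 hAsm
  rw [htm] at h6
  exact absurd (lt_of_lt_of_le h6 h5) (lt_irrefl _)

/-- X-simple image eigencone for an x̲-open interval. -/
theorem stmt18 {n : ℕ} (A : Matrix (Fin n) (Fin n) ℝ≥0) (lam : ℝ≥0) (hlam : 0 < lam)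
    (X : Fin n → Set ℝ≥0) (hX : IsInterval X)
    (hopen : ∀ j : Fin n, sInf (X j) ∉ X j)
    (hne : (eigencone A lam ∩ box X).Nonempty) :
    XSimple A lam X ↔
      ∀ i : Fin n,
        ¬ ∃ x : Fin n → ℝ≥0,
          x ∈ spanMinus A i ∧ x ∈ eigencone A lam ∧ x ∈ box X := by
  constructor
  · -- X-simple ⟹ no intersection
    intro hXS i ⟨x, hsp, hxe, hxb⟩
    have hpos : ∀ r, 0 < x r := mem_box_pos hopen hxb
    obtain ⟨j, hj⟩ := exists_redundant hlam hsp hxe hpos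
    obtain ⟨t, htX, htlt⟩ := exists_lt_mem hopen hxb j
    set y := Function.update x j t with hy
    have hyb : y ∈ box X := by
      intro k
      by_cases hk : k = j
      · subst hk; rw [hy, Function.update_self]; exact htX
      · rw [hy, Function.update_of_ne hk]; exact hxb k
    have hAy : mulVec A y = fun r => lam * x r := by
      funext r
      show Finset.univ.sup (fun k => A r k * y k) = lam * x r
      rw [sup_split j]
      have he : (Finset.univ.erase j).sup (fun k => A r k * y k)
          = (Finset.univ.erase j).sup (fun k => A r k * x k) :=
        Finset.sup_congr rfl (fun k hk => by
          rw [hy, Function.update_of_ne (Finset.ne_of_mem_erase hk)])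
      have ht : A r j * y j ≤ lam * x r := by
        rw [hy, Function.update_self]
        calc A r j * t ≤ A r j * x j := mul_le_mul_right htlt.le _
        _ ≤ lam * x r := by
            have hfx : Finset.univ.sup (fun k => A r k * x k) = lam * x r := congrFun hxe r
            rw [← hfx]; exact Finset.le_sup (f := fun k => A r k * x k) (Finset.mem_univ j)
      rw [he, hj r]
      exact sup_eq_right.mpr ht
    have := hXS x ⟨hxe, hxb⟩ y hyb hAy
    have : y j = x j := congrFun this j
    rw [hy, Function.update_self] at this
    exact absurd this (ne_of_lt htlt)
  · -- no intersection ⟹ X-simple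
    intro h x ⟨hxe, hxb⟩ y hyb hAy
    have hpos : ∀ r, 0 < x r := mem_box_pos hopen hxb
    by_contra hne'
    by_cases hc : ∃ j, y j < x j
    · obtain ⟨j, hj⟩ := hc
      exact h j ⟨x, spanMinus_of_redundant hlam (redundant_of_lt hlam hxe hAy hpos hj),
        hxe, hxb⟩
    · push_neg at hc
      have hj : ∃ j, x j < y j := by
        by_contra h'
        push_neg at h'
        exact hne' (funext fun j => le_antisymm (h' j) (hc j))
      obtain ⟨j, hj⟩ := hj
      exact h j ⟨x, spanMinus_of_redundant hlam (redundant_of_gt hlam hxe hAy hpos hj),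
        hxe, hxb⟩

end MaxAlg

end
end

section
/- Let A be an n×n matrix over ℝ≥0, λ > 0, and let X ⊆ ℝ≥0^n be an interval, X = {x : x_j ∈ X_j for all j} with each X_j ⊆ ℝ≥0 nonempty and order-convex, which is x̲-open (inf X_j ∉ X_j for every j). Assume V(A,λ) ∩ X ≠ ∅ and that A has X-simple image eigencone associated with λ. Then: (a) every index i ∈ {1,…,n} is a critical node, i.e. N_c(A,λ) = {1,…,n}; and (b) for every index i there is exactly one index j such that the pair (i,j) occurs as a pair of consecutive values on some cycle lying in N^λ(A) whose weight equals λ raised to its length (i.e., the critical graph crit(A,λ) consists of disjoint cycles). -/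
open scoped NNReal ENNReal

noncomputable section

namespace MaxAlg

/-- Shift a product around a cycle: since `σ k = σ 0`, the product of `g ∘ σ`
shifted by one equals the unshifted product (when `g (σ 0) ≠ 0`). -/
lemma shift_prod {k : ℕ} (g : ℕ → ℝ≥0) (hk : g k = g 0) (h0 : g 0 ≠ 0) :
    ∏ t ∈ Finset.range k, g (t + 1) = ∏ t ∈ Finset.range k, g t := by
  have h1 := Finset.prod_range_succ' g k
  have h2 := Finset.prod_range_succ g k
  rw [h2, hk] at h1
  exact mul_right_cancel₀ h0 h1.symm

/-- If `f ≤ g` pointwise on `s`, the products agree, and `g` is positive on `s`,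
then `f = g` pointwise on `s`. -/
lemma factor_eq_of_prod_eq {s : Finset ℕ} {f g : ℕ → ℝ≥0}
    (hle : ∀ t ∈ s, f t ≤ g t) (hprod : ∏ t ∈ s, f t = ∏ t ∈ s, g t)
    (hg : ∀ t ∈ s, g t ≠ 0) : ∀ t ∈ s, f t = g t := by
  intro t ht
  refine le_antisymm (hle t ht) ?_
  have hP : ∏ u ∈ s.erase t, f u ≤ ∏ u ∈ s.erase t, g u :=
    Finset.prod_le_prod' fun u hu => hle u (Finset.mem_of_mem_erase hu)
  have hfe : f t * ∏ u ∈ s.erase t, f u = ∏ u ∈ s, f u :=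
    Finset.mul_prod_erase s f ht
  have hge : g t * ∏ u ∈ s.erase t, g u = ∏ u ∈ s, g u :=
    Finset.mul_prod_erase s g ht
  have hPne : ∏ u ∈ s.erase t, g u ≠ 0 :=
    Finset.prod_ne_zero_iff.mpr fun u hu => hg u (Finset.mem_of_mem_erase hu)
  have : g t * ∏ u ∈ s.erase t, g u ≤ f t * ∏ u ∈ s.erase t, g u := by
    calc g t * ∏ u ∈ s.erase t, g u = ∏ u ∈ s, g u := hge
      _ = ∏ u ∈ s, f u := hprod.symm
      _ = f t * ∏ u ∈ s.erase t, f u := hfe.symm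
      _ ≤ f t * ∏ u ∈ s.erase t, g u := mul_le_mul_right hP _
  exact le_of_mul_le_mul_right this (pos_iff_ne_zero.mpr hPne)

/-- If each edge of a cycle is saturated for the positive vector `x`,
then the cycle weight is `lam ^ k`. -/
lemma weight_of_sat {n : ℕ} {A : Matrix (Fin n) (Fin n) ℝ≥0} {lam : ℝ≥0}
    {x : Fin n → ℝ≥0} {k : ℕ} {σ : ℕ → Fin n}
    (hσ : σ k = σ 0) (hpos : ∀ j, x j ≠ 0)
    (hsat : ∀ t < k, A (σ t) (σ (t + 1)) * x (σ (t + 1)) = lam * x (σ t)) :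
    cycleWeight A k σ = lam ^ k := by
  have hprod : ∏ t ∈ Finset.range k, (A (σ t) (σ (t + 1)) * x (σ (t + 1)))
      = ∏ t ∈ Finset.range k, (lam * x (σ t)) :=
    Finset.prod_congr rfl fun t ht => hsat t (Finset.mem_range.mp ht)
  have hshift : ∏ t ∈ Finset.range k, x (σ (t + 1)) = ∏ t ∈ Finset.range k, x (σ t) :=
    shift_prod (fun t => x (σ t)) (by simp [hσ]) (hpos _)
  rw [Finset.prod_mul_distrib, Finset.prod_mul_distrib, hshift,
    Finset.prod_const, Finset.card_range] at hprod
  exact mul_right_cancel₀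
    (Finset.prod_ne_zero_iff.mpr fun t _ => hpos (σ t)) hprod

/-- Conversely, if the cycle weight is `lam ^ k` while all edges satisfy
`A i j * x j ≤ lam * x i` for positive `x`, then every edge is saturated. -/
lemma sat_of_weight {n : ℕ} {A : Matrix (Fin n) (Fin n) ℝ≥0} {lam : ℝ≥0}
    {x : Fin n → ℝ≥0} {k : ℕ} {σ : ℕ → Fin n}
    (hσ : σ k = σ 0) (hpos : ∀ j, x j ≠ 0) (hlam : lam ≠ 0)
    (hle : ∀ i j, A i j * x j ≤ lam * x i)
    (hw : cycleWeight A k σ = lam ^ k) :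
    ∀ t < k, A (σ t) (σ (t + 1)) * x (σ (t + 1)) = lam * x (σ t) := by
  have hshift : ∏ t ∈ Finset.range k, x (σ (t + 1)) = ∏ t ∈ Finset.range k, x (σ t) :=
    shift_prod (fun t => x (σ t)) (by simp [hσ]) (hpos _)
  have hprod : ∏ t ∈ Finset.range k, (A (σ t) (σ (t + 1)) * x (σ (t + 1)))
      = ∏ t ∈ Finset.range k, (lam * x (σ t)) := by
    rw [Finset.prod_mul_distrib, Finset.prod_mul_distrib, hshift,
      Finset.prod_const, Finset.card_range]
    exact congrArg (· * _) hw
  have := factor_eq_of_prod_eq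
    (f := fun t => A (σ t) (σ (t + 1)) * x (σ (t + 1)))
    (g := fun t => lam * x (σ t))
    (fun t _ => hle _ _) hprod
    (fun t _ => mul_ne_zero hlam (hpos _))
  exact fun t ht => this t (Finset.mem_range.mpr ht)

/-- if A has X-simple image eigencone for an x̲-open interval X,
then all nodes are critical and crit(A,λ) consists of disjoint cycles. -/
theorem stmt19 {n : ℕ} (A : Matrix (Fin n) (Fin n) ℝ≥0) (lam : ℝ≥0) (hlam : 0 < lam)
    (X : Fin n → Set ℝ≥0) (hX : IsInterval X)
    (hopen : ∀ j : Fin n, sInf (X j) ∉ X j)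
    (hne : (eigencone A lam ∩ box X).Nonempty)
    (hsimple : XSimple A lam X) :
    (∀ i : Fin n, CritNode A lam i) ∧
    (∀ i : Fin n, ∃! j : Fin n, CritEdge A lam i j) := by
  classical
  obtain ⟨x, hxe, hxb⟩ := hne
  have hxe' : mulVec A x = fun i => lam * x i := hxe
  -- positivity of x
  have hxpos : ∀ j, x j ≠ 0 := by
    intro j hj
    have h1 : sInf (X j) ≤ x j := csInf_le (OrderBot.bddBelow _) (hxb j)
    have h2 : sInf (X j) = x j := le_antisymm h1 (by rw [hj]; exact zero_le)
    exact hopen j (by rw [h2]; exact hxb j)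
  -- element of X j strictly below x j
  have hbelow : ∀ j, ∃ s ∈ X j, s < x j := by
    intro j
    by_contra hc
    push_neg at hc
    apply hopen j
    have h1 : sInf (X j) ≤ x j := csInf_le (OrderBot.bddBelow _) (hxb j)
    have h2 : x j ≤ sInf (X j) := le_csInf (hX j).1 hc
    rw [le_antisymm h1 h2]
    exact hxb j
  -- basic inequality
  have hle : ∀ i j, A i j * x j ≤ lam * x i := by
    intro i j
    have h : mulVec A x i = lam * x i := congrFun hxe' i
    rw [← h]
    exact Finset.le_sup (f := fun j' => A i j' * x j') (Finset.mem_univ j)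
  -- each row attains
  have hattain : ∀ i : Fin n, ∃ j, A i j * x j = lam * x i := by
    intro i
    have h2 : Finset.univ.sup (fun j => A i j * x j) = lam * x i := congrFun hxe' i
    obtain ⟨j, _, hj⟩ := Finset.exists_mem_eq_sup Finset.univ
      ⟨i, Finset.mem_univ i⟩ (fun j => A i j * x j)
    exact ⟨j, by rw [← h2]; exact hj.symm⟩
  -- each column has a row where it is the unique maximizer
  have hcol : ∀ j : Fin n, ∃ i, A i j * x j = lam * x i ∧
      ∀ j', j' ≠ j → A i j' * x j' < lam * x i := by
    intro j
    by_contra hcon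
    push_neg at hcon
    obtain ⟨s, hsX, hslt⟩ := hbelow j
    set y := Function.update x j s with hy
    have hyb : y ∈ box X := by
      intro r
      by_cases hr : r = j
      · subst hr; simpa [hy] using hsX
      · simpa [hy, Function.update_of_ne hr] using hxb r
    have hyle : ∀ r, y r ≤ x r := by
      intro r
      by_cases hr : r = j
      · subst hr; simp [hy, hslt.le]
      · simp [hy, Function.update_of_ne hr]
    have hmul : mulVec A y = fun i => lam * x i := by
      funext i
      apply le_antisymm
      · apply Finset.sup_le
        intro j' _
        exact le_trans (mul_le_mul_right (hyle j') _) (hle i j')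
      · -- find an attaining column different from j
        obtain ⟨j₀, hj₀⟩ := hattain i
        rcases eq_or_ne j₀ j with hj | hj
        · subst hj
          obtain ⟨j', hj'ne, hj'ge⟩ := hcon i hj₀
          have hj'eq : A i j' * y j' = lam * x i := by
            rw [hy, Function.update_of_ne hj'ne]
            exact le_antisymm (hle i j') hj'ge
          rw [← hj'eq]
          exact Finset.le_sup (f := fun j'' => A i j'' * y j'') (Finset.mem_univ j')
        · have hj₀eq : A i j₀ * y j₀ = lam * x i := by
            rw [hy, Function.update_of_ne hj]
            exact hj₀
          rw [← hj₀eq]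
          exact Finset.le_sup (f := fun j'' => A i j'' * y j'') (Finset.mem_univ j₀)
    have hyx : y = x := hsimple x ⟨hxe, hxb⟩ y hyb hmul
    have : y j = x j := congrFun hyx j
    rw [hy, Function.update_self] at this
    exact absurd this (ne_of_lt hslt)
  choose r hr1 hr2 using hcol
  have hrinj : Function.Injective r := by
    intro j j' hjj'
    by_contra hne'
    have h1 := hr1 j
    rw [hjj'] at h1
    exact absurd h1 (ne_of_lt (hr2 j' j hne'))
  have hrbij : Function.Bijective r := Finite.injective_iff_bijective.mp hrinj
  set e : Equiv.Perm (Fin n) := Equiv.ofBijective r hrbij with he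
  set π : Fin n → Fin n := fun i => e.symm i with hπ
  have hre : ∀ j, e j = r j := fun j => rfl
  have hrπ : ∀ i, r (π i) = i := fun i => by
    rw [← hre]; exact e.apply_symm_apply i
  have hπ1 : ∀ i, A i (π i) * x (π i) = lam * x i := by
    intro i
    have := hr1 (π i)
    rwa [hrπ i] at this
  have hπ2 : ∀ i j, j ≠ π i → A i j * x j < lam * x i := by
    intro i j hj
    have := hr2 (π i) j hj
    rwa [hrπ i] at this
  -- the permutation cycle through i
  set k : ℕ := orderOf e.symm with hk
  have hk1 : 1 ≤ k := orderOf_pos e.symm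
  have hcyc : ∀ i : Fin n, ∃ σ : ℕ → Fin n, σ 0 = i ∧ σ k = σ 0 ∧
      (∀ t, σ (t + 1) = π (σ t)) := by
    intro i
    refine ⟨fun t => (e.symm ^ t) i, by simp, ?_, ?_⟩
    · simp [hk, pow_orderOf_eq_one]
    · intro t
      show (e.symm ^ (t + 1)) i = e.symm ((e.symm ^ t) i)
      rw [pow_succ']
      rfl
  have hlamne : lam ≠ 0 := ne_of_gt hlam
  constructor
  · -- (a) every node is critical
    intro i
    obtain ⟨σ, hσ0, hσk, hσs⟩ := hcyc i
    have hsat : ∀ t < k, A (σ t) (σ (t + 1)) * x (σ (t + 1)) = lam * x (σ t) := by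
      intro t _
      rw [hσs t]
      exact hπ1 (σ t)
    exact ⟨k, σ, ⟨hk1, hσk⟩, fun t _ => ⟨x, hxe, pos_iff_ne_zero.mpr (hxpos (σ t))⟩,
      weight_of_sat hσk hxpos hsat, 0, hk1, hσ0⟩
  · -- (b) unique outgoing critical edge
    intro i
    refine ⟨π i, ?_, ?_⟩
    · obtain ⟨σ, hσ0, hσk, hσs⟩ := hcyc i
      have hsat : ∀ t < k, A (σ t) (σ (t + 1)) * x (σ (t + 1)) = lam * x (σ t) := by
        intro t _
        rw [hσs t]
        exact hπ1 (σ t)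
      exact ⟨k, σ, ⟨hk1, hσk⟩, fun t _ => ⟨x, hxe, pos_iff_ne_zero.mpr (hxpos (σ t))⟩,
        weight_of_sat hσk hxpos hsat, 0, hk1, hσ0, by rw [hσs 0, hσ0]⟩
    · rintro j ⟨k', σ', ⟨hk'1, hσ'k⟩, _, hw', t, htk, hti, htj⟩
      have hsat := sat_of_weight hσ'k hxpos hlamne hle hw' t htk
      rw [hti, htj] at hsat
      by_contra hne'
      exact absurd hsat (ne_of_lt (hπ2 i j hne'))

end MaxAlg

end
end
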